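/- Let p ≥ 0, let Ξ = [ξ₀, …, ξ_{n+p}] be a nondecreasing open knot vector on [0,1], and let w₀, …, w_{n−1} be strictly positive real weights. Then for every x ∈ [0,1) the denominator ∑_{j=0}^{n−1} B_{j,p}(x)·w_j is strictly positive; consequently the NURBS basis functions N_{i,p}(x) = B_{i,p}(x)·w_i / ∑_{j} B_{j,p}(x)·w_j are well defined, nonnegative, and satisfy ∑_{i=0}^{n−1} N_{i,p}(x) = 1 for every x ∈ [0,1). -/

import Mathlib

/-- The Cox–de Boor recursion for B-spline basis functions: `coxDeBoor ξ p i = B_{i,p}`.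
`B_{i,0}(x) = 1` if `ξᵢ ≤ x < ξ_{i+1}` and `0` otherwise;
`B_{i,p}(x) = ((x−ξᵢ)/(ξ_{i+p}−ξᵢ))·B_{i,p−1}(x)
              + ((ξ_{i+p+1}−x)/(ξ_{i+p+1}−ξ_{i+1}))·B_{i+1,p−1}(x)`,
with the convention that a term is `0` whenever its denominator vanishes. -/
noncomputable def coxDeBoor (ξ : ℕ → ℝ) : ℕ → ℕ → ℝ → ℝ
  | 0, i, x => if ξ i ≤ x ∧ x < ξ (i + 1) then 1 else 0
  | p + 1, i, x =>
      (if ξ (i + p + 1) = ξ i then 0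
        else (x - ξ i) / (ξ (i + p + 1) - ξ i) * coxDeBoor ξ p i x) +
      (if ξ (i + p + 2) = ξ (i + 1) then 0
        else (ξ (i + p + 2) - x) / (ξ (i + p + 2) - ξ (i + 1)) * coxDeBoor ξ p (i + 1) x)

/-- Nonnegativity and support of the Cox–de Boor B-spline basis functions. -/
theorem coxDeBoor_aux (N : ℕ) (ξ : ℕ → ℝ)
    (hmono : ∀ i j : ℕ, i ≤ j → j ≤ N → ξ i ≤ ξ j) :
    ∀ q i : ℕ, ∀ x : ℝ, i + q + 1 ≤ N →
      0 ≤ coxDeBoor ξ q i x ∧ (x < ξ i → coxDeBoor ξ q i x = 0) ∧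
        (ξ (i + q + 1) ≤ x → coxDeBoor ξ q i x = 0) := by
  intro q
  induction q with
  | zero =>
    intro i x _
    simp only [coxDeBoor]
    refine ⟨by split <;> norm_num, ?_, ?_⟩
    · intro hx
      rw [if_neg]
      rintro ⟨h1, _⟩
      exact absurd hx (not_lt.2 h1)
    · intro hx
      rw [if_neg]
      rintro ⟨_, h2⟩
      exact absurd h2 (not_lt.2 (by simpa using hx))
  | succ q ih =>
    intro i x hle
    have h1 : i + q + 1 ≤ N := by omega
    have h2 : (i + 1) + q + 1 ≤ N := by omega
    obtain ⟨ha0, ha1, ha2⟩ := ih i x h1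
    obtain ⟨hb0, hb1, hb2⟩ := ih (i + 1) x h2
    have hidx : i + (q + 1) + 1 = i + q + 2 := by ring
    have hmono1 : ξ i ≤ ξ (i + 1) := hmono i (i + 1) (by omega) (by omega)
    have hmono2 : ξ i ≤ ξ (i + q + 1) := hmono i (i + q + 1) (by omega) (by omega)
    have hmono3 : ξ (i + 1) ≤ ξ (i + q + 2) := hmono (i + 1) (i + q + 2) (by omega) (by omega)
    have hmono4 : ξ (i + q + 1) ≤ ξ (i + q + 2) := hmono _ _ (by omega) (by omega)
    simp only [coxDeBoor, hidx]
    refine ⟨?_, ?_, ?_⟩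
    · have t1 : 0 ≤ (if ξ (i + q + 1) = ξ i then 0
          else (x - ξ i) / (ξ (i + q + 1) - ξ i) * coxDeBoor ξ q i x) := by
        split
        · exact le_refl 0
        · rename_i h
          have hlt : ξ i < ξ (i + q + 1) := lt_of_le_of_ne hmono2 (Ne.symm h)
          rcases lt_or_ge x (ξ i) with hx | hx
          · rw [ha1 hx, mul_zero]
          · exact mul_nonneg (div_nonneg (by linarith) (by linarith)) ha0
      have t2 : 0 ≤ (if ξ (i + q + 2) = ξ (i + 1) then 0
          else (ξ (i + q + 2) - x) / (ξ (i + q + 2) - ξ (i + 1)) * coxDeBoor ξ q (i + 1) x) := by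
        split
        · exact le_refl 0
        · rename_i h
          have hlt : ξ (i + 1) < ξ (i + q + 2) := lt_of_le_of_ne hmono3 (Ne.symm h)
          rcases lt_or_ge x (ξ (i + 1)) with hx | hx
          · rw [hb1 hx, mul_zero]
          · rcases le_or_gt (ξ (i + q + 2)) x with hx2 | hx2
            · rw [hb2 (by simpa [show i + 1 + q + 1 = i + q + 2 from by ring] using hx2), mul_zero]
            · exact mul_nonneg (div_nonneg (by linarith) (by linarith)) hb0
      linarith
    · intro hx
      rw [ha1 hx, hb1 (lt_of_lt_of_le hx hmono1)]
      split <;> split <;> ring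
    · intro hx
      rw [ha2 (le_trans hmono4 hx),
        hb2 (by simpa [show i + 1 + q + 1 = i + q + 2 from by ring] using hx)]
      split <;> split <;> ring

/-- Partition of unity for B-splines on an open knot vector. -/
theorem coxDeBoor_partition (p n : ℕ) (hn : p < n) (ξ : ℕ → ℝ)
    (hmono : ∀ i j : ℕ, i ≤ j → j ≤ n + p → ξ i ≤ ξ j)
    (hfirst : ∀ i ≤ p, ξ i = 0)
    (hlast : ∀ i : ℕ, n ≤ i → i ≤ n + p → ξ i = 1) :
    ∀ q ≤ p, ∀ x : ℝ, 0 ≤ x → x < 1 →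
      ∑ i ∈ Finset.range (n + p - q), coxDeBoor ξ q i x = 1 := by
  have aux := coxDeBoor_aux (n + p) ξ hmono
  intro q
  induction q with
  | zero =>
    intro _ x hx0 hx1
    classical
    simp only [Nat.sub_zero]
    have h0mem : (0 : ℕ) ∈ (Finset.range (n + p)).filter (fun i => ξ i ≤ x) := by
      simp only [Finset.mem_filter, Finset.mem_range]
      exact ⟨by omega, by rw [hfirst 0 (Nat.zero_le p)]; exact hx0⟩
    set S := (Finset.range (n + p)).filter (fun i => ξ i ≤ x) with hS
    have hne : S.Nonempty := ⟨0, h0mem⟩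
    set k := S.max' hne with hk
    have hkmem : k ∈ S := S.max'_mem hne
    obtain ⟨hkr, hkx⟩ := Finset.mem_filter.1 hkmem
    have hkr' : k < n + p := Finset.mem_range.1 hkr
    have hk1 : x < ξ (k + 1) := by
      by_contra hcon
      push_neg at hcon
      rcases Nat.lt_or_ge (k + 1) (n + p) with h | h
      · have : k + 1 ∈ S := Finset.mem_filter.2 ⟨Finset.mem_range.2 h, hcon⟩
        have := S.le_max' _ this
        omega
      · have : ξ (k + 1) = 1 := hlast (k + 1) (by omega) (by omega)
        rw [this] at hcon
        linarith
    rw [Finset.sum_eq_single_of_mem k (Finset.mem_range.2 hkr')]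
    · simp only [coxDeBoor]
      rw [if_pos ⟨hkx, hk1⟩]
    · intro j hj hjk
      simp only [coxDeBoor]
      rw [if_neg]
      rintro ⟨hj1, hj2⟩
      rcases Nat.lt_or_ge j k with h | h
      · have : ξ (j + 1) ≤ ξ k := hmono (j + 1) k (by omega) (by omega)
        linarith
      · have hjS : j ∈ S := Finset.mem_filter.2 ⟨hj, hj1⟩
        have := S.le_max' _ hjS
        omega
  | succ q ih =>
    intro hq x hx0 hx1
    have hq' : q ≤ p := by omega
    have ihx := ih hq' x hx0 hx1
    set m := n + p - q with hm
    have hm1 : n + p - (q + 1) = m - 1 := by omega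
    have hm2 : m - 1 + 1 = m := by omega
    have hmn : n ≤ m - 1 := by omega
    set B : ℕ → ℝ := fun i => coxDeBoor ξ q i x with hB
    set c : ℕ → ℝ := fun i => if ξ (i + q + 1) = ξ i then 0
      else (x - ξ i) / (ξ (i + q + 1) - ξ i) with hc
    set d : ℕ → ℝ := fun i => if ξ (i + q + 1) = ξ i then 0
      else (ξ (i + q + 1) - x) / (ξ (i + q + 1) - ξ i) with hd
    have hterm : ∀ i, coxDeBoor ξ (q + 1) i x = c i * B i + d (i + 1) * B (i + 1) := by
      intro i
      simp only [coxDeBoor, hc, hd, hB]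
      congr 1
      · split <;> simp
      · have : i + 1 + q + 1 = i + q + 2 := by ring
        rw [this]
        split <;> simp
    have hcd : ∀ i, i + q + 1 ≤ n + p → (c i + d i) * B i = B i := by
      intro i hi
      by_cases h : ξ (i + q + 1) = ξ i
      · have hB0 : B i = 0 := by
          rcases le_or_gt (ξ i) x with hx | hx
          · exact (aux q i x hi).2.2 (h ▸ hx)
          · exact (aux q i x hi).2.1 hx
        rw [hB0, mul_zero]
      · have h1 : ξ (i + q + 1) - ξ i ≠ 0 := sub_ne_zero.2 h
        simp only [hc, hd, if_neg h]
        rw [← add_div, show x - ξ i + (ξ (i + q + 1) - x) = ξ (i + q + 1) - ξ i by ring,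
          div_self h1, one_mul]
    have hd0 : d 0 * B 0 = 0 := by
      have : ξ (0 + q + 1) = ξ 0 := by
        rw [hfirst (0 + q + 1) (by omega), hfirst 0 (Nat.zero_le p)]
      simp only [hd, if_pos this, zero_mul]
    have hctop : c (m - 1) * B (m - 1) = 0 := by
      have hx1' : ξ (m - 1) = 1 := hlast (m - 1) hmn (by omega)
      have : B (m - 1) = 0 := (aux q (m - 1) x (by omega)).2.1 (by rw [hx1']; exact hx1)
      rw [this, mul_zero]
    calc ∑ i ∈ Finset.range (n + p - (q + 1)), coxDeBoor ξ (q + 1) i x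
        = ∑ i ∈ Finset.range (m - 1), (c i * B i + d (i + 1) * B (i + 1)) := by
          rw [hm1]; exact Finset.sum_congr rfl fun i _ => hterm i
      _ = (∑ i ∈ Finset.range (m - 1), c i * B i) +
            ∑ i ∈ Finset.range (m - 1), d (i + 1) * B (i + 1) := Finset.sum_add_distrib
      _ = (∑ i ∈ Finset.range m, c i * B i) - c (m - 1) * B (m - 1) +
            ((∑ i ∈ Finset.range m, d i * B i) - d 0 * B 0) := by
          obtain ⟨M, hM⟩ : ∃ M, m = M + 1 := ⟨m - 1, hm2.symm⟩
          have hM1 : m - 1 = M := by omega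
          rw [hM1, hM, Finset.sum_range_succ (fun i => c i * B i) M,
            Finset.sum_range_succ' (fun i => d i * B i) M]
          ring
      _ = ∑ i ∈ Finset.range m, (c i + d i) * B i := by
          rw [hd0, hctop, sub_zero, sub_zero, ← Finset.sum_add_distrib]
          exact Finset.sum_congr rfl fun i _ => by ring
      _ = ∑ i ∈ Finset.range m, B i := Finset.sum_congr rfl fun i hi =>
          hcd i (by have := Finset.mem_range.1 hi; omega)
      _ = 1 := ihx

/-- For a nondecreasing open knot vector on `[0,1]` and strictly positive
weights `w₀, …, w_{n−1}`, the NURBS denominator `∑_j B_{j,p}(x)·w_j` is strictly positive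
on `[0,1)`; consequently the NURBS basis functions
`N_{i,p}(x) = B_{i,p}(x)·w_i / ∑_j B_{j,p}(x)·w_j` are well defined, nonnegative, and sum
to `1` for every `x ∈ [0,1)`. -/
theorem nurbs_well_defined_nonneg_partition_of_unity (p n : ℕ) (hn : p < n) (ξ : ℕ → ℝ)
    (hmono : ∀ i j : ℕ, i ≤ j → j ≤ n + p → ξ i ≤ ξ j)
    (hfirst : ∀ i ≤ p, ξ i = 0)
    (hlast : ∀ i : ℕ, n ≤ i → i ≤ n + p → ξ i = 1)
    (w : ℕ → ℝ) (hw : ∀ i < n, 0 < w i) :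
    ∀ x ∈ Set.Ico (0 : ℝ) 1,
      0 < (∑ j ∈ Finset.range n, coxDeBoor ξ p j x * w j) ∧
      (∀ i < n,
        0 ≤ coxDeBoor ξ p i x * w i / ∑ j ∈ Finset.range n, coxDeBoor ξ p j x * w j) ∧
      ∑ i ∈ Finset.range n,
          coxDeBoor ξ p i x * w i / (∑ j ∈ Finset.range n, coxDeBoor ξ p j x * w j) = 1 := by
  intro x hx
  obtain ⟨hx0, hx1⟩ := Set.mem_Ico.1 hx
  have hsum : ∑ i ∈ Finset.range n, coxDeBoor ξ p i x = 1 := by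
    have := coxDeBoor_partition p n hn ξ hmono hfirst hlast p le_rfl x hx0 hx1
    rwa [show n + p - p = n from by omega] at this
  have hnn : ∀ i < n, 0 ≤ coxDeBoor ξ p i x := fun i hi =>
    (coxDeBoor_aux (n + p) ξ hmono p i x (by omega)).1
  have htnn : ∀ i ∈ Finset.range n, 0 ≤ coxDeBoor ξ p i x * w i := fun i hi =>
    mul_nonneg (hnn i (Finset.mem_range.1 hi)) (hw i (Finset.mem_range.1 hi)).le
  have hS0 : 0 ≤ ∑ j ∈ Finset.range n, coxDeBoor ξ p j x * w j := Finset.sum_nonneg htnn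
  have hSpos : 0 < ∑ j ∈ Finset.range n, coxDeBoor ξ p j x * w j := by
    rcases hS0.lt_or_eq with h | h
    · exact h
    · exfalso
      have hall := (Finset.sum_eq_zero_iff_of_nonneg htnn).1 h.symm
      have : ∑ i ∈ Finset.range n, coxDeBoor ξ p i x = 0 := by
        refine Finset.sum_eq_zero fun i hi => ?_
        have := hall i hi
        have hwne : w i ≠ 0 := (hw i (Finset.mem_range.1 hi)).ne'
        exact (mul_eq_zero.1 this).resolve_right hwne
      rw [hsum] at this
      exact one_ne_zero this
  refine ⟨hSpos, fun i hi => div_nonneg (mul_nonneg (hnn i hi) (hw i hi).le) hS0, ?_⟩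
  rw [← Finset.sum_div, div_self hSpos.ne']
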